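/- For the two-layer neural network label function f̃(x) := ⟨a_2, σ(A_1^T x + b_1)⟩ + b_2, with x having a smooth density satisfying regularity (vanishing boundary) conditions, the cross-moment between the label and the third-order score function has the CP decomposition E[ỹ · S_3(x)] = Σ_{j=1}^k λ_j · (A_1)_j ⊗ (A_1)_j ⊗ (A_1)_j, where λ_j = E[σ'''(z_j)] · a_2(j) with z = A_1^T x + b_1. -/

import Mathlib

open MeasureTheory

lemma aux_third_deriv {d : ℕ} (σ : ℝ → ℝ) (hσ : ContDiff ℝ 3 σ)
    (w : EuclideanSpace ℝ (Fin d)) (a b : ℝ) (x : EuclideanSpace ℝ (Fin d))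
    (v1 v2 v3 : EuclideanSpace ℝ (Fin d)) :
    iteratedFDeriv ℝ 3 (fun x => a * σ ((inner ℝ w x : ℝ) + b)) x ![v1, v2, v3]
      = a * (deriv (deriv (deriv σ)) ((inner ℝ w x : ℝ) + b)
          * ((inner ℝ w v1 : ℝ) * (inner ℝ w v2 : ℝ) * (inner ℝ w v3 : ℝ))) := by
  set L : EuclideanSpace ℝ (Fin d) →L[ℝ] ℝ := innerSL ℝ w with hL
  set φ : ℝ → ℝ := fun t => σ (t + b) with hφdef
  have hφ : ContDiff ℝ 3 φ := hσ.comp (contDiff_id.add contDiff_const)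
  have h1 : (fun x : EuclideanSpace ℝ (Fin d) => a * σ ((inner ℝ w x : ℝ) + b))
      = a • (φ ∘ L) := by
    funext y; simp [hφdef, hL, Function.comp, smul_eq_mul]
  rw [h1, iteratedFDeriv_const_smul_apply ((hφ.comp L.contDiff).contDiffAt),
    L.iteratedFDeriv_comp_right hφ x le_rfl]
  simp only [ContinuousMultilinearMap.smul_apply,
    ContinuousMultilinearMap.compContinuousLinearMap_apply,
    iteratedFDeriv_apply_eq_iteratedDeriv_mul_prod]
  have h3 : iteratedDeriv 3 φ = fun t => deriv (deriv (deriv σ)) (t + b) := by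
    have := iteratedDeriv_comp_add_const 3 σ b
    rw [hφdef, this]
    funext t
    simp [iteratedDeriv_succ, iteratedDeriv_zero]
  rw [h3]
  simp only [Fin.prod_univ_three]
  simp [hL, smul_eq_mul]
  exact Or.inl (mul_comm _ _)


/-- For the two-layer neural network label function
`f̃(x) = ⟨a₂, σ(A₁ᵀ x + b₁)⟩ + b₂`, with `x` having a smooth density `p` and assuming the
Stein-type identity `E[f̃(x)·S₃(x)] = E[∇^{(3)} f̃(x)]`, the cross-moment between the label
and the third-order score function `S₃(x) = -∇^{(3)}p(x)/p(x)` has the CP decomposition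
`E[ỹ · S₃(x)] = Σ_j λ_j (A₁)_j ⊗ (A₁)_j ⊗ (A₁)_j` with
`λ_j = E[σ'''(z_j)]·a₂(j)`, `z = A₁ᵀ x + b₁`, stated entrywise. -/
theorem cross_moment_CP_decomposition
    (d k : ℕ) (p : EuclideanSpace ℝ (Fin d) → ℝ)
    (hp : ContDiff ℝ 3 p) (hppos : ∀ x, 0 < p x)
    (σ : ℝ → ℝ) (hσ : ContDiff ℝ 3 σ)
    (A1 : Fin k → EuclideanSpace ℝ (Fin d)) (a2 b1 : Fin k → ℝ) (b2 : ℝ)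
    (f : EuclideanSpace ℝ (Fin d) → ℝ)
    (hf : ∀ x, f x = (∑ j, a2 j * σ ((inner ℝ (A1 j) x : ℝ) + b1 j)) + b2)
    (μ : Measure (EuclideanSpace ℝ (Fin d)))
    (hμ : μ = volume.withDensity (fun x => ENNReal.ofReal (p x)))
    (hμprob : IsProbabilityMeasure μ)
    (hStein : ∀ v1 v2 v3 : EuclideanSpace ℝ (Fin d),
      ∫ x, f x * (-(p x)⁻¹ * iteratedFDeriv ℝ 3 p x ![v1, v2, v3]) ∂μ
        = ∫ x, iteratedFDeriv ℝ 3 f x ![v1, v2, v3] ∂μ)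
    (hIntS : ∀ v1 v2 v3 : EuclideanSpace ℝ (Fin d),
      Integrable (fun x => f x * (-(p x)⁻¹ * iteratedFDeriv ℝ 3 p x ![v1, v2, v3])) μ)
    (hIntσ : ∀ j, Integrable
      (fun x => deriv (deriv (deriv σ)) ((inner ℝ (A1 j) x : ℝ) + b1 j)) μ) :
    ∀ i1 i2 i3 : Fin d,
      ∫ x, f x * (-(p x)⁻¹ * iteratedFDeriv ℝ 3 p x
          ![EuclideanSpace.single i1 (1 : ℝ), EuclideanSpace.single i2 (1 : ℝ),
            EuclideanSpace.single i3 (1 : ℝ)]) ∂μ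
        = ∑ j, ((∫ x, deriv (deriv (deriv σ)) ((inner ℝ (A1 j) x : ℝ) + b1 j) ∂μ) * a2 j)
            * (A1 j i1 * A1 j i2 * A1 j i3) := by
  intro i1 i2 i3
  rw [hStein]
  have hC : ∀ j : Fin k, ContDiff ℝ 3
      (fun x : EuclideanSpace ℝ (Fin d) => a2 j * σ ((inner ℝ (A1 j) x : ℝ) + b1 j)) :=
    fun j => contDiff_const.mul (hσ.comp (((innerSL ℝ (A1 j)).contDiff).add contDiff_const))
  have hsingle : ∀ (j : Fin k) (i : Fin d),
      (inner ℝ (A1 j) (EuclideanSpace.single i (1 : ℝ)) : ℝ) = A1 j i := by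
    intro j i
    simp [EuclideanSpace.inner_single_right]
  have key : ∀ x, iteratedFDeriv ℝ 3 f x
      ![EuclideanSpace.single i1 (1 : ℝ), EuclideanSpace.single i2 (1 : ℝ),
        EuclideanSpace.single i3 (1 : ℝ)]
      = ∑ j, a2 j * (deriv (deriv (deriv σ)) ((inner ℝ (A1 j) x : ℝ) + b1 j)
          * (A1 j i1 * A1 j i2 * A1 j i3)) := by
    intro x
    have h1 : f = (fun y => ∑ j, a2 j * σ ((inner ℝ (A1 j) y : ℝ) + b1 j))
        + fun _ => b2 := funext hf
    rw [h1, iteratedFDeriv_add_apply (ContDiff.sum fun j _ => hC j).contDiffAt contDiff_const.contDiffAt,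
      iteratedFDeriv_const_of_ne (by norm_num)]
    have hsum : iteratedFDeriv ℝ 3
        (fun y => ∑ j, a2 j * σ ((inner ℝ (A1 j) y : ℝ) + b1 j)) x
        = ∑ j, iteratedFDeriv ℝ 3
            (fun y => a2 j * σ ((inner ℝ (A1 j) y : ℝ) + b1 j)) x := by
      have h := iteratedFDeriv_sum (𝕜 := ℝ) (i := 3)
        (f := fun (j : Fin k) (y : EuclideanSpace ℝ (Fin d)) =>
          a2 j * σ ((inner ℝ (A1 j) y : ℝ) + b1 j)) (u := Finset.univ)
        (fun j _ => hC j)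
      exact (congrFun h x).trans (by rw [Finset.sum_apply])
    simp only [Pi.zero_apply, ContinuousMultilinearMap.add_apply,
      ContinuousMultilinearMap.zero_apply, add_zero]
    rw [hsum, ContinuousMultilinearMap.sum_apply]
    refine Finset.sum_congr rfl fun j _ => ?_
    rw [aux_third_deriv σ hσ (A1 j) (a2 j) (b1 j) x _ _ _,
      hsingle j i1, hsingle j i2, hsingle j i3]
  rw [integral_congr_ae (Filter.Eventually.of_forall key),
    integral_finset_sum _ (fun j _ => ((hIntσ j).mul_const _).const_mul _)]
  refine Finset.sum_congr rfl fun j _ => ?_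
  rw [integral_const_mul, integral_mul_const]
  ring
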